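/- Let P be a stochastic matrix on a finite state space V. For any subsets Δ_1 ⊆ Δ_2 ⊊ V, det((I−P)^{Δ_1}) ≤ det((I−P)^{Δ_2}), where (I−P)^Δ denotes the principal submatrix of I−P with rows and columns in Δ removed. In particular all such determinants are nonnegative. -/

import Mathlib

open Matrix BigOperators

lemma schur_det {n : ℕ} (A : Matrix (Fin (n+1)) (Fin (n+1)) ℝ) (h : A 0 0 ≠ 0) :
    A.det = A 0 0 * (Matrix.of fun j k : Fin n =>
      A j.succ k.succ - A j.succ 0 * A 0 k.succ / A 0 0).det := by
  classical
  let e : Fin 1 ⊕ Fin n ≃ Fin (n+1) := finSumFinEquiv.trans (finCongr (by omega))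
  have he0 : ∀ i : Fin 1, e (Sum.inl i) = 0 := by
    intro i; apply Fin.ext
    simp [e, finSumFinEquiv, Fin.ext_iff]
  have heS : ∀ j : Fin n, e (Sum.inr j) = j.succ := by
    intro j; apply Fin.ext
    simp [e, finSumFinEquiv]
  have hA : A.submatrix e e = Matrix.fromBlocks
      (Matrix.of fun _ _ : Fin 1 => A 0 0)
      (Matrix.of fun (_ : Fin 1) (k : Fin n) => A 0 k.succ)
      (Matrix.of fun (j : Fin n) (_ : Fin 1) => A j.succ 0)
      (Matrix.of fun j k : Fin n => A j.succ k.succ) := by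
    ext (i|i) (j|j) <;> simp [he0, heS, Matrix.fromBlocks]
  haveI hinv : Invertible (Matrix.of fun _ _ : Fin 1 => A 0 0) := by
    refine ⟨Matrix.of fun _ _ : Fin 1 => (A 0 0)⁻¹, ?_, ?_⟩ <;>
    · ext i j
      simp [Matrix.mul_apply, Fin.sum_univ_one, Matrix.one_apply, Subsingleton.elim i j,
        inv_mul_cancel₀ h, mul_inv_cancel₀ h]
  have := Matrix.det_fromBlocks₁₁ (m := Fin 1) (n := Fin n)
      (Matrix.of fun _ _ : Fin 1 => A 0 0)
      (Matrix.of fun (_ : Fin 1) (k : Fin n) => A 0 k.succ)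
      (Matrix.of fun (j : Fin n) (_ : Fin 1) => A j.succ 0)
      (Matrix.of fun j k : Fin n => A j.succ k.succ)
  rw [← Matrix.det_submatrix_equiv_self e, hA, this]
  congr 1
  · simp [Matrix.det_fin_one]
  · congr 1
    ext j k
    have hi : (⅟(Matrix.of fun _ _ : Fin 1 => A 0 0)) = Matrix.of fun _ _ : Fin 1 => (A 0 0)⁻¹ := by
      apply invOf_eq_right_inv
      ext i j
      simp [Matrix.mul_apply, Fin.sum_univ_one, Matrix.one_apply, Subsingleton.elim i j,
        mul_inv_cancel₀ h]
    simp [hi, Matrix.mul_apply, Fin.sum_univ_one, Matrix.sub_apply, div_eq_mul_inv]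
    ring


section helpers
variable {ι : Type*} [Fintype ι] [DecidableEq ι]

lemma diag_nonneg (A : Matrix ι ι ℝ) (hZ : ∀ i j, i ≠ j → A i j ≤ 0)
    (hrow : ∀ i, 0 ≤ ∑ j, A i j) (i : ι) : 0 ≤ A i i := by
  have h1 : ∑ j, A i j = A i i + ∑ j ∈ {i}ᶜ, A i j := Fintype.sum_eq_add_sum_compl i _
  have h2 : ∑ j ∈ ({i}ᶜ : Finset ι), A i j ≤ 0 := by
    apply Finset.sum_nonpos
    intro j hj
    exact hZ i j (fun h => by simp [h] at hj)
  have := hrow i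
  linarith

lemma row_zero (A : Matrix ι ι ℝ) (hZ : ∀ i j, i ≠ j → A i j ≤ 0)
    (hrow : ∀ i, 0 ≤ ∑ j, A i j) (i : ι) (hii : A i i = 0) : ∀ j, A i j = 0 := by
  have h1 : ∑ j, A i j = A i i + ∑ j ∈ {i}ᶜ, A i j := Fintype.sum_eq_add_sum_compl i _
  have hnp : ∀ j ∈ ({i}ᶜ : Finset ι), A i j ≤ 0 := by
    intro j hj; exact hZ i j (fun h => by simp [h] at hj)
  have h2 : ∑ j ∈ ({i}ᶜ : Finset ι), A i j ≤ 0 := Finset.sum_nonpos hnp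
  have h3 : ∑ j ∈ ({i}ᶜ : Finset ι), A i j = 0 := by
    have := hrow i; linarith [h1]
  intro j
  by_cases hji : j = i
  · rw [hji, hii]
  · exact (Finset.sum_eq_zero_iff_of_nonpos hnp).mp h3 j (by simp [hji])

end helpers


/-- Schur complement after eliminating index 0. -/
noncomputable def schurM {n : ℕ} (A : Matrix (Fin (n+1)) (Fin (n+1)) ℝ) : Matrix (Fin n) (Fin n) ℝ :=
  Matrix.of fun j k : Fin n => A j.succ k.succ - A j.succ 0 * A 0 k.succ / A 0 0

lemma schurM_Z {n : ℕ} (A : Matrix (Fin (n+1)) (Fin (n+1)) ℝ)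
    (hZ : ∀ i j, i ≠ j → A i j ≤ 0) (hd : 0 < A 0 0) :
    ∀ i j, i ≠ j → schurM A i j ≤ 0 := by
  intro i j hij
  have h1 : A i.succ j.succ ≤ 0 := hZ _ _ (by simpa [Fin.succ_inj] using hij)
  have h2 : A i.succ 0 ≤ 0 := hZ _ _ (Fin.succ_ne_zero i)
  have h3 : A 0 j.succ ≤ 0 := hZ _ _ (Fin.succ_ne_zero j).symm
  have h4 : 0 ≤ A i.succ 0 * A 0 j.succ := by
    nlinarith
  have h5 : 0 ≤ A i.succ 0 * A 0 j.succ / A 0 0 := div_nonneg h4 hd.le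
  simp only [schurM, Matrix.of_apply]
  linarith

lemma schurM_row {n : ℕ} (A : Matrix (Fin (n+1)) (Fin (n+1)) ℝ)
    (hZ : ∀ i j, i ≠ j → A i j ≤ 0) (hrow : ∀ i, 0 ≤ ∑ j, A i j) (hd : 0 < A 0 0) :
    ∀ i, 0 ≤ ∑ j, schurM A i j := by
  intro i
  have hsum : ∀ m : Fin (n+1), ∑ k : Fin n, A m k.succ = (∑ j, A m j) - A m 0 := by
    intro m
    rw [Fin.sum_univ_succ (f := fun j => A m j)]
    ring
  have hcalc : ∑ j, schurM A i j
      = ((∑ j, A i.succ j) - A i.succ 0) - ((∑ j, A 0 j) - A 0 0) * (A i.succ 0 / A 0 0) := by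
    simp only [schurM, Matrix.of_apply, Finset.sum_sub_distrib]
    rw [hsum i.succ]
    congr 1
    have : ∀ x : Fin n, A i.succ 0 * A 0 x.succ / A 0 0 = A 0 x.succ * (A i.succ 0 / A 0 0) := by
      intro x; ring
    simp only [this]
    rw [← Finset.sum_mul, hsum 0]
  rw [hcalc]
  have h2 : A i.succ 0 ≤ 0 := hZ _ _ (Fin.succ_ne_zero i)
  have hr1 : 0 ≤ ∑ j, A i.succ j := hrow _
  have hr0 : 0 ≤ ∑ j, A 0 j := hrow _
  have key : ((∑ j, A i.succ j) - A i.succ 0) - ((∑ j, A 0 j) - A 0 0) * (A i.succ 0 / A 0 0)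
      = (∑ j, A i.succ j) - (∑ j, A 0 j) * A i.succ 0 / A 0 0 := by
    field_simp
    ring
  rw [key]
  have : (∑ j, A 0 j) * A i.succ 0 / A 0 0 ≤ 0 :=
    div_nonpos_of_nonpos_of_nonneg (mul_nonpos_of_nonneg_of_nonpos hr0 h2) hd.le
  linarith

lemma schurM_mono {n : ℕ} (A C : Matrix (Fin (n+1)) (Fin (n+1)) ℝ)
    (hZA : ∀ i j, i ≠ j → A i j ≤ 0) (hZC : ∀ i j, i ≠ j → C i j ≤ 0)
    (hAC : ∀ i j, A i j ≤ C i j) (hdA : 0 < A 0 0) :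
    ∀ i j, schurM A i j ≤ schurM C i j := by
  intro i j
  have hdC : 0 < C 0 0 := lt_of_lt_of_le hdA (hAC 0 0)
  have ha : A i.succ 0 ≤ 0 := hZA _ _ (Fin.succ_ne_zero i)
  have hb : A 0 j.succ ≤ 0 := hZA _ _ (Fin.succ_ne_zero j).symm
  have ha' : C i.succ 0 ≤ 0 := hZC _ _ (Fin.succ_ne_zero i)
  have hb' : C 0 j.succ ≤ 0 := hZC _ _ (Fin.succ_ne_zero j).symm
  have h1 : 0 ≤ C i.succ 0 * C 0 j.succ := by nlinarith
  have h2 : C i.succ 0 * C 0 j.succ ≤ A i.succ 0 * A 0 j.succ := by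
    nlinarith [hAC i.succ 0, hAC 0 j.succ]
  have h3 : C i.succ 0 * C 0 j.succ / C 0 0 ≤ A i.succ 0 * A 0 j.succ / A 0 0 :=
    div_le_div₀ (by nlinarith) h2 hdA (hAC 0 0)
  simp only [schurM, Matrix.of_apply]
  have := hAC i.succ j.succ
  linarith

/-- key induction: for Z-matrices with A having nonnegative row sums and A ≤ C entrywise,
`0 ≤ det C` and `det A ≤ det C`. -/
lemma key : ∀ (n : ℕ) (A C : Matrix (Fin n) (Fin n) ℝ),
    (∀ i j, i ≠ j → A i j ≤ 0) → (∀ i, 0 ≤ ∑ j, A i j) →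
    (∀ i j, i ≠ j → C i j ≤ 0) → (∀ i j, A i j ≤ C i j) →
    0 ≤ C.det ∧ A.det ≤ C.det := by
  intro n
  induction n with
  | zero =>
    intro A C _ _ _ _
    simp [Matrix.det_fin_zero]
  | succ n ih =>
    intro A C hZA hrA hZC hAC
    have hrC : ∀ i, 0 ≤ ∑ j, C i j := fun i =>
      le_trans (hrA i) (Finset.sum_le_sum fun j _ => hAC i j)
    have hdA0 : 0 ≤ A 0 0 := diag_nonneg A hZA hrA 0
    have hdC0 : 0 ≤ C 0 0 := le_trans hdA0 (hAC 0 0)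
    rcases eq_or_lt_of_le hdC0 with hC0 | hC0
    · -- C 0 0 = 0, then A 0 0 = 0, rows zero
      have hA0 : A 0 0 = 0 := le_antisymm (hC0 ▸ hAC 0 0) hdA0
      have hArow0 := row_zero A hZA hrA 0 hA0
      have hCrow0 : ∀ j, C 0 j = 0 := by
        intro j
        by_cases hj : j = 0
        · rw [hj, ← hC0]
        · exact le_antisymm (hZC 0 j (Ne.symm hj)) ((hArow0 j) ▸ hAC 0 j)
      rw [Matrix.det_eq_zero_of_row_eq_zero 0 hArow0,
        Matrix.det_eq_zero_of_row_eq_zero 0 hCrow0]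
      exact ⟨le_refl 0, le_refl 0⟩
    · rcases eq_or_lt_of_le hdA0 with hA0 | hA0
      · -- A 0 0 = 0, row of A zero, det A = 0; det C ≥ 0 via Schur
        have hArow0 := row_zero A hZA hrA 0 hA0.symm
        rw [Matrix.det_eq_zero_of_row_eq_zero 0 hArow0]
        have hdet : C.det = C 0 0 * (schurM C).det := schur_det C (ne_of_gt hC0)
        have hSC := ih (schurM C) (schurM C) (schurM_Z C hZC hC0) (schurM_row C hZC hrC hC0)
          (schurM_Z C hZC hC0) (fun i j => le_refl _)
        constructor
        · rw [hdet]; exact mul_nonneg hC0.le hSC.1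
        · rw [hdet]; exact mul_nonneg hC0.le hSC.1
      · -- A 0 0 > 0
        have hdetA : A.det = A 0 0 * (schurM A).det := schur_det A (ne_of_gt hA0)
        have hdetC : C.det = C 0 0 * (schurM C).det := schur_det C (ne_of_gt hC0)
        have hZSA := schurM_Z A hZA hA0
        have hrSA := schurM_row A hZA hrA hA0
        have hZSC := schurM_Z C hZC hC0
        have hmono := schurM_mono A C hZA hZC hAC hA0
        have h1 := ih (schurM A) (schurM C) hZSA hrSA hZSC hmono
        have h2 := ih (schurM A) (schurM A) hZSA hrSA hZSA (fun i j => le_refl _)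
        constructor
        · rw [hdetC]; exact mul_nonneg hC0.le h1.1
        · rw [hdetA, hdetC]
          calc A 0 0 * (schurM A).det ≤ A 0 0 * (schurM C).det := by
                exact mul_le_mul_of_nonneg_left h1.2 hA0.le
            _ ≤ C 0 0 * (schurM C).det := mul_le_mul_of_nonneg_right (hAC 0 0) h1.1

lemma det_nonneg_general {ι : Type*} [Fintype ι] [DecidableEq ι] (A : Matrix ι ι ℝ)
    (hZ : ∀ i j, i ≠ j → A i j ≤ 0) (hrow : ∀ i, 0 ≤ ∑ j, A i j) : 0 ≤ A.det := by
  classical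
  let e := (Fintype.equivFin ι).symm
  rw [← Matrix.det_submatrix_equiv_self e]
  refine (key _ (A.submatrix e e) (A.submatrix e e) ?_ ?_ ?_ (fun i j => le_refl _)).1
  · intro i j hij
    exact hZ (e i) (e j) (fun h => hij (e.injective h))
  · intro i
    have : ∑ j, A (e i) (e j) = ∑ j, A (e i) j := Equiv.sum_comp e _
    simpa [Matrix.submatrix_apply, this] using hrow (e i)
  · intro i j hij
    exact hZ (e i) (e j) (fun h => hij (e.injective h))

lemma step_fin {n : ℕ} (A : Matrix (Fin (n+1)) (Fin (n+1)) ℝ)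
    (hZ : ∀ i j, i ≠ j → A i j ≤ 0) (hrow : ∀ i, 0 ≤ ∑ j, A i j) (hd : A 0 0 ≤ 1) :
    A.det ≤ (Matrix.of fun j k : Fin n => A j.succ k.succ).det := by
  set A' : Matrix (Fin n) (Fin n) ℝ := Matrix.of fun j k : Fin n => A j.succ k.succ with hA'
  have hZA' : ∀ i j, i ≠ j → A' i j ≤ 0 := fun i j hij =>
    hZ _ _ (by simpa [Fin.succ_inj] using hij)
  have hrA' : ∀ i, 0 ≤ ∑ j, A' i j := by
    intro i
    have h1 : ∑ j : Fin n, A i.succ j.succ = (∑ j, A i.succ j) - A i.succ 0 := by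
      rw [Fin.sum_univ_succ (f := fun j => A i.succ j)]; ring
    have h2 : A i.succ 0 ≤ 0 := hZ _ _ (Fin.succ_ne_zero i)
    have h3 := hrow i.succ
    simp only [hA', Matrix.of_apply]
    rw [h1]; linarith
  have hdA0 : 0 ≤ A 0 0 := diag_nonneg A hZ hrow 0
  rcases eq_or_lt_of_le hdA0 with hA0 | hA0
  · rw [Matrix.det_eq_zero_of_row_eq_zero 0 (row_zero A hZ hrow 0 hA0.symm)]
    exact det_nonneg_general A' hZA' hrA'
  · have hdet : A.det = A 0 0 * (schurM A).det := schur_det A (ne_of_gt hA0)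
    have hle : ∀ i j, schurM A i j ≤ A' i j := by
      intro i j
      have ha : A i.succ 0 ≤ 0 := hZ _ _ (Fin.succ_ne_zero i)
      have hb : A 0 j.succ ≤ 0 := hZ _ _ (Fin.succ_ne_zero j).symm
      have : 0 ≤ A i.succ 0 * A 0 j.succ / A 0 0 := div_nonneg (by nlinarith) hA0.le
      simp only [schurM, Matrix.of_apply, hA']
      linarith
    have h1 := key n (schurM A) A' (schurM_Z A hZ hA0) (schurM_row A hZ hrow hA0) hZA' hle
    rw [hdet]
    calc A 0 0 * (schurM A).det ≤ A 0 0 * A'.det := mul_le_mul_of_nonneg_left h1.2 hA0.le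
      _ ≤ 1 * A'.det := mul_le_mul_of_nonneg_right hd h1.1
      _ = A'.det := one_mul _

lemma step_subtype {ι : Type*} [Fintype ι] [DecidableEq ι] (A : Matrix ι ι ℝ)
    (hZ : ∀ i j, i ≠ j → A i j ≤ 0) (hrow : ∀ i, 0 ≤ ∑ j, A i j)
    (hdiag : ∀ i, A i i ≤ 1) (i : ι) :
    A.det ≤ (A.submatrix (fun j : {j : ι // j ≠ i} => (j : ι))
      (fun j : {j : ι // j ≠ i} => (j : ι))).det := by
  classical
  set n := Fintype.card {j : ι // j ≠ i} with hn
  have hcard : Fintype.card ι = n + 1 := by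
    rw [hn, Fintype.card_subtype_compl]
    have : 0 < Fintype.card ι := Fintype.card_pos_iff.mpr ⟨i⟩
    simp [Fintype.card_subtype_eq]
    omega
  let e₁ : {j : ι // j ≠ i} ≃ Fin n := Fintype.equivFin _
  let e : Fin (n+1) ≃ ι :=
    (finSuccEquiv n).trans ((e₁.symm.optionCongr).trans (Equiv.optionSubtypeNe i))
  have he0 : e 0 = i := by simp [e, finSuccEquiv_zero, -Equiv.optionCongr_symm, Equiv.optionCongr_apply]
  have heS : ∀ j : Fin n, e j.succ = (e₁.symm j : ι) := by
    intro j; simp [e, finSuccEquiv_succ, -Equiv.optionCongr_symm, Equiv.optionCongr_apply]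
  rw [← Matrix.det_submatrix_equiv_self e]
  have hZ' : ∀ a b : Fin (n+1), a ≠ b → (A.submatrix e e) a b ≤ 0 := fun a b hab =>
    hZ (e a) (e b) (fun h => hab (e.injective h))
  have hrow' : ∀ a, 0 ≤ ∑ b, (A.submatrix e e) a b := by
    intro a
    have : ∑ b, A (e a) (e b) = ∑ b, A (e a) b := Equiv.sum_comp e _
    simpa [Matrix.submatrix_apply, this] using hrow (e a)
  have hd' : (A.submatrix e e) 0 0 ≤ 1 := by
    simp only [Matrix.submatrix_apply, he0]; exact hdiag i
  have hstep := step_fin (A.submatrix e e) hZ' hrow' hd'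
  refine le_trans hstep (le_of_eq ?_)
  have : (Matrix.of fun j k : Fin n => (A.submatrix e e) j.succ k.succ)
      = (A.submatrix (fun j : {j : ι // j ≠ i} => (j : ι))
          (fun j : {j : ι // j ≠ i} => (j : ι))).submatrix e₁.symm e₁.symm := by
    ext j k
    simp [Matrix.submatrix_apply, heS]
  rw [this, Matrix.det_submatrix_equiv_self]

/-- The principal submatrix of `M` obtained by deleting the rows and columns
indexed by the finite set `Δ`. -/
def mdel {V : Type*} [DecidableEq V] (M : Matrix V V ℝ) (Δ : Finset V) :
    Matrix {a // a ∉ Δ} {a // a ∉ Δ} ℝ :=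
  M.submatrix Subtype.val Subtype.val

section main
variable {V : Type*} [Fintype V] [DecidableEq V]

lemma mdel_Z (P : Matrix V V ℝ) (hpos : ∀ a b, 0 ≤ P a b) (Δ : Finset V) :
    ∀ a b : {a // a ∉ Δ}, a ≠ b → mdel (1 - P) Δ a b ≤ 0 := by
  intro a b hab
  have hv : (a : V) ≠ (b : V) := fun h => hab (Subtype.ext h)
  simp only [mdel, Matrix.submatrix_apply, Matrix.sub_apply, Matrix.one_apply_ne hv]
  linarith [hpos (a : V) (b : V)]

lemma mdel_row (P : Matrix V V ℝ) (hpos : ∀ a b, 0 ≤ P a b) (hrow : ∀ a, ∑ b, P a b = 1)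
    (Δ : Finset V) : ∀ a : {a // a ∉ Δ}, 0 ≤ ∑ b, mdel (1 - P) Δ a b := by
  intro a
  have h1 : ∑ b : {a // a ∉ Δ}, (1 : Matrix V V ℝ) (a : V) (b : V) = 1 := by
    have : ∀ b : {a // a ∉ Δ}, (1 : Matrix V V ℝ) (a : V) (b : V)
        = if a = b then (1:ℝ) else 0 := by
      intro b
      simp only [Matrix.one_apply, Subtype.ext_iff]
    simp only [this]
    simp
  have h2 : ∑ b : {a // a ∉ Δ}, P (a : V) (b : V) ≤ 1 := by
    have heq : ∑ b ∈ Δᶜ, P (a : V) b = ∑ b : {a // a ∉ Δ}, P (a : V) (b : V) :=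
      Finset.sum_subtype Δᶜ (fun y => by simp) _
    rw [← heq, ← hrow (a : V)]
    exact Finset.sum_le_sum_of_subset_of_nonneg (Finset.subset_univ _)
      (fun b _ _ => hpos _ b)
  simp only [mdel, Matrix.submatrix_apply, Matrix.sub_apply, Finset.sum_sub_distrib]
  rw [h1]
  linarith

lemma mdel_diag (P : Matrix V V ℝ) (hpos : ∀ a b, 0 ≤ P a b) (Δ : Finset V) :
    ∀ a : {a // a ∉ Δ}, mdel (1 - P) Δ a a ≤ 1 := by
  intro a
  simp only [mdel, Matrix.submatrix_apply, Matrix.sub_apply, Matrix.one_apply_eq]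
  linarith [hpos (a : V) (a : V)]

lemma mdel_step (P : Matrix V V ℝ) (hpos : ∀ a b, 0 ≤ P a b) (hrow : ∀ a, ∑ b, P a b = 1)
    (Δ : Finset V) (x : V) (hx : x ∉ Δ) :
    (mdel (1 - P) Δ).det ≤ (mdel (1 - P) (insert x Δ)).det := by
  have hstep := step_subtype (mdel (1 - P) Δ) (mdel_Z P hpos Δ)
    (mdel_row P hpos hrow Δ) (mdel_diag P hpos Δ) ⟨x, hx⟩
  refine le_trans hstep (le_of_eq ?_)
  let ee : {a : V // a ∉ insert x Δ} ≃ {j : {a : V // a ∉ Δ} // j ≠ ⟨x, hx⟩} :=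
    { toFun := fun a => ⟨⟨a.1, fun h => a.2 (Finset.mem_insert_of_mem h)⟩,
        fun h => a.2 (by
          have : a.1 = x := congrArg Subtype.val h
          rw [this]; exact Finset.mem_insert_self x Δ)⟩
      invFun := fun j => ⟨j.1.1, by
        intro h
        rcases Finset.mem_insert.mp h with h | h
        · exact j.2 (Subtype.ext h)
        · exact j.1.2 h⟩
      left_inv := fun a => rfl
      right_inv := fun j => rfl }
  have hmat : mdel (1 - P) (insert x Δ)
      = (((mdel (1 - P) Δ).submatrix
          (fun j : {j : {a : V // a ∉ Δ} // j ≠ (⟨x, hx⟩ : {a : V // a ∉ Δ})} =>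
            (j : {a : V // a ∉ Δ}))
          (fun j : {j : {a : V // a ∉ Δ} // j ≠ (⟨x, hx⟩ : {a : V // a ∉ Δ})} =>
            (j : {a : V // a ∉ Δ}))).submatrix (⇑ee) (⇑ee)) := rfl
  rw [hmat, Matrix.det_submatrix_equiv_self]

lemma mdel_mono (P : Matrix V V ℝ) (hpos : ∀ a b, 0 ≤ P a b) (hrow : ∀ a, ∑ b, P a b = 1) :
    ∀ (k : ℕ) (Δ Δ' : Finset V), Δ ⊆ Δ' → (Δ' \ Δ).card = k →
    (mdel (1 - P) Δ).det ≤ (mdel (1 - P) Δ').det := by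
  intro k
  induction k with
  | zero =>
    intro Δ Δ' hsub hcard
    have : Δ' = Δ := Finset.Subset.antisymm
      ((Finset.sdiff_eq_empty_iff_subset).mp (Finset.card_eq_zero.mp hcard)) hsub
    rw [this]
  | succ k ih =>
    intro Δ Δ' hsub hcard
    have hne : (Δ' \ Δ).Nonempty := Finset.card_pos.mp (by omega)
    obtain ⟨x, hx⟩ := hne
    have hx' : x ∈ Δ' := (Finset.mem_sdiff.mp hx).1
    have hxΔ : x ∉ Δ := (Finset.mem_sdiff.mp hx).2
    have h1 := mdel_step P hpos hrow Δ x hxΔ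
    have h2 : insert x Δ ⊆ Δ' := Finset.insert_subset hx' hsub
    have h3 : (Δ' \ insert x Δ).card = k := by
      rw [Finset.sdiff_insert, Finset.card_erase_of_mem hx, hcard]
      omega
    exact le_trans h1 (ih (insert x Δ) Δ' h2 h3)

end main

/-- For a stochastic matrix `P` and subsets `Δ₁ ⊆ Δ₂ ⊊ V`,
`det((I-P)^{Δ₁}) ≤ det((I-P)^{Δ₂})`; in particular all such determinants
are nonnegative. -/
theorem stmt12 {V : Type*} [Fintype V] [DecidableEq V] (P : Matrix V V ℝ)
    (hpos : ∀ a b, 0 ≤ P a b) (hrow : ∀ a, ∑ b, P a b = 1)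
    (Δ₁ Δ₂ : Finset V) (h12 : Δ₁ ⊆ Δ₂) (hproper : Δ₂ ≠ Finset.univ) :
    (mdel (1 - P) Δ₁).det ≤ (mdel (1 - P) Δ₂).det ∧
    ∀ Δ : Finset V, 0 ≤ (mdel (1 - P) Δ).det := by
  constructor
  · exact mdel_mono P hpos hrow (Δ₂ \ Δ₁).card Δ₁ Δ₂ h12 rfl
  · intro Δ
    exact det_nonneg_general _ (mdel_Z P hpos Δ) (mdel_row P hpos hrow Δ)
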